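/- Let X be a T₀ topological space. Then IGS(X) = IS(X) = 𝒟(X), the family of monotone determined open sets of X. -/

import Mathlib

open Set Topology

universe u v

variable {X : Type u}

/-- The specialization order: `x ≤ y` iff `x` lies in the closure of `{y}`. -/
def sle [TopologicalSpace X] (x y : X) : Prop := x ∈ closure ({y} : Set X)

/-- `↑A` with respect to the specialization order. -/
def upSet [TopologicalSpace X] (A : Set X) : Set X := {x | ∃ a ∈ A, sle a x}

/-- `↓A` with respect to the specialization order. -/
def downSet [TopologicalSpace X] (A : Set X) : Set X := {x | ∃ a ∈ A, sle x a}

/-- A subset is directed: nonempty and any two elements have an upper bound in it. -/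
def DirSet [TopologicalSpace X] (D : Set X) : Prop :=
  D.Nonempty ∧ ∀ a ∈ D, ∀ b ∈ D, ∃ c ∈ D, sle a c ∧ sle b c

/-- `D →_τ x`: every open set containing `x` meets `D`. -/
def DConv [TopologicalSpace X] (D : Set X) (x : X) : Prop :=
  ∀ U : Set X, IsOpen U → x ∈ U → (D ∩ U).Nonempty

/-- Monotone determined open set. -/
def MDOpen [TopologicalSpace X] (U : Set X) : Prop :=
  ∀ D : Set X, DirSet D → ∀ x ∈ U, DConv D x → (D ∩ U).Nonempty

/-- Monotone determined space: every monotone determined open set is open. -/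
def MonDet (X : Type u) [TopologicalSpace X] : Prop :=
  ∀ U : Set X, MDOpen U → IsOpen U

/-- `x ≪_d y`. -/
def dwb [TopologicalSpace X] (x y : X) : Prop :=
  ∀ D : Set X, DirSet D → DConv D y → ∃ d ∈ D, sle x d

/-- `⇓_d x = {y | y ≪_d x}`. -/
def dDown [TopologicalSpace X] (x : X) : Set X := {y | dwb y x}

/-- `⇑_d x = {y | x ≪_d y}`. -/
def dUp [TopologicalSpace X] (x : X) : Set X := {y | dwb x y}

/-- c-space. -/
def CSpace (X : Type u) [TopologicalSpace X] : Prop :=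
  ∀ U : Set X, IsOpen U → ∀ y ∈ U, ∃ x : X, y ∈ interior (upSet {x}) ∧ upSet {x} ⊆ U

/-- Locally hypercompact space. -/
def LocallyHypercompact (X : Type u) [TopologicalSpace X] : Prop :=
  ∀ U : Set X, IsOpen U → ∀ x ∈ U, ∃ F : Set X, F.Finite ∧ F.Nonempty ∧
    x ∈ interior (upSet F) ∧ upSet F ⊆ U

/-- `A^{↓≪} = {x ∈ A : ⇓_d x ∩ A ≠ ∅}`. -/
def lowApprox [TopologicalSpace X] (A : Set X) : Set X :=
  {x | x ∈ A ∧ (dDown x ∩ A).Nonempty}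

/-- `A^{↑≪} = {x : ⇓_d x ⊆ ↓A}`. -/
def upApprox [TopologicalSpace X] (A : Set X) : Set X :=
  {x | dDown x ⊆ downSet A}

/-- `Ã = {x : ∃ directed D ⊆ ↓A ∩ ↓x with D →_τ x}`. -/
def tilde [TopologicalSpace X] (A : Set X) : Set X :=
  {x | ∃ D : Set X, DirSet D ∧ D ⊆ downSet A ∩ downSet {x} ∧ DConv D x}

/-- `Â = {x : ∃ directed D ⊆ ↓A with D →_τ x}`. -/
def hatSet [TopologicalSpace X] (A : Set X) : Set X :=
  {x | ∃ D : Set X, DirSet D ∧ D ⊆ downSet A ∧ DConv D x}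

/-- One-step closure. -/
def OneStepClosure (X : Type u) [TopologicalSpace X] : Prop :=
  ∀ A : Set X, tilde A = closure A

/-- Weak one-step closure. -/
def WeakOneStepClosure (X : Type u) [TopologicalSpace X] : Prop :=
  ∀ A : Set X, hatSet A = closure A

/-- d-meet continuous space. -/
def DMeetCont (X : Type u) [TopologicalSpace X] : Prop :=
  MonDet X ∧ ∀ (D : Set X) (x : X), DirSet D → DConv D x →
    x ∈ closure (downSet D ∩ downSet {x})

/-- An ideal on `J`: closed under subsets and finite unions. -/
def IsIdeal {J : Type v} (I : Set (Set J)) : Prop :=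
  (∀ A ∈ I, ∀ B : Set J, B ⊆ A → B ∈ I) ∧ ∀ A ∈ I, ∀ B ∈ I, A ∪ B ∈ I

/-- IS-convergence of a net with respect to an ideal. -/
def ISConv [TopologicalSpace X] {J : Type v} (xj : J → X) (I : Set (Set J)) (x : X) : Prop :=
  ∃ D : Set X, DirSet D ∧ DConv D x ∧ ∀ d ∈ D, {j | ¬ sle d (xj j)} ∈ I

/-- I-convergence of a net with respect to an (explicit) topology. -/
def IConvT {J : Type v} (t : TopologicalSpace X) (xj : J → X) (I : Set (Set J)) (x : X) : Prop :=
  ∀ U : Set X, t.IsOpen U → x ∈ U → {j | xj j ∉ U} ∈ I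

/-- ISL-convergence. -/
def ISLConv [TopologicalSpace X] {J : Type v} (xj : J → X) (I : Set (Set J)) (x : X) : Prop :=
  ISConv xj I x ∧ ∀ y : X, {j | ¬ sle y (xj j)} ∈ I → sle y x

/-- A directed family of nonempty finite subsets (Smyth preorder). -/
def DirFam [TopologicalSpace X] (F : Set (Set X)) : Prop :=
  (∀ G ∈ F, G.Finite ∧ G.Nonempty) ∧
  ∀ G1 ∈ F, ∀ G2 ∈ F, ∃ G ∈ F, G ⊆ upSet G1 ∩ upSet G2

/-- `ℱ →_τ x`: every open set containing `x` contains a member of `ℱ`. -/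
def FConv [TopologicalSpace X] (F : Set (Set X)) (x : X) : Prop :=
  ∀ U : Set X, IsOpen U → x ∈ U → ∃ G ∈ F, G ⊆ U

/-- IGS-convergence. -/
def IGSConv [TopologicalSpace X] {J : Type v} (xj : J → X) (I : Set (Set J)) (x : X) : Prop :=
  ∃ F : Set (Set X), DirFam F ∧ FConv F x ∧ ∀ G ∈ F, {j | xj j ∉ upSet G} ∈ I

/-- IGSL-convergence. -/
def IGSLConv [TopologicalSpace X] {J : Type v} (xj : J → X) (I : Set (Set J)) (x : X) : Prop :=
  IGSConv xj I x ∧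
    ∀ G : Set X, G.Finite → G.Nonempty → {j | xj j ∉ upSet G} ∈ I → x ∈ upSet G

/-- The Lawson topology: generated by the open sets of `τ` and complements of `↑y`. -/
def lawson (X : Type u) [TopologicalSpace X] : TopologicalSpace X :=
  TopologicalSpace.generateFrom {V | IsOpen V ∨ ∃ y : X, V = (upSet {y})ᶜ}

/-- The family `IS(X)`. -/
def memIS (X : Type u) [TopologicalSpace X] (U : Set X) : Prop :=
  ∀ (J : Type u) [Preorder J], Nonempty J → (∀ a b : J, ∃ c, a ≤ c ∧ b ≤ c) →
    ∀ (xj : J → X) (I : Set (Set J)), IsIdeal I →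
      ∀ x ∈ U, ISConv xj I x → {j | xj j ∉ U} ∈ I

/-- The family `IGS(X)`. -/
def memIGS (X : Type u) [TopologicalSpace X] (U : Set X) : Prop :=
  ∀ (J : Type u) [Preorder J], Nonempty J → (∀ a b : J, ∃ c, a ≤ c ∧ b ≤ c) →
    ∀ (xj : J → X) (I : Set (Set J)), IsIdeal I →
      ∀ x ∈ U, IGSConv xj I x → {j | xj j ∉ U} ∈ I

section Aux

variable [TopologicalSpace X]

lemma sle_refl' (x : X) : sle x x := subset_closure rfl

lemma sle_trans' {x y z : X} (h1 : sle x y) (h2 : sle y z) : sle x z := by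
  have h : closure ({y} : Set X) ⊆ closure ({z} : Set X) :=
    closure_minimal (by simpa [Set.singleton_subset_iff] using (show y ∈ closure ({z} : Set X) from h2)) isClosed_closure
  exact h h1

lemma mdopen_upper {U : Set X} (hU : MDOpen U) {x y : X} (hx : x ∈ U) (hxy : sle x y) :
    y ∈ U := by
  have hD : DirSet ({y} : Set X) := by
    refine ⟨⟨y, rfl⟩, ?_⟩
    intro a ha b hb
    exact ⟨y, rfl, by rw [Set.mem_singleton_iff] at ha; rw [ha]; exact sle_refl' y,
      by rw [Set.mem_singleton_iff] at hb; rw [hb]; exact sle_refl' y⟩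
  have hconv : DConv ({y} : Set X) x := by
    intro V hV hxV
    have h := (mem_closure_iff.mp hxy) V hV hxV
    rwa [Set.inter_comm] at h
  obtain ⟨c, hc, hcU⟩ := hU {y} hD x hx hconv
  rcases hc with rfl
  exact hcU

/-- Rudin's lemma for the specialization preorder. -/
lemma rudin_lemma (F : Set (Set X)) (hne : F.Nonempty)
    (hfin : ∀ G ∈ F, G.Finite ∧ G.Nonempty)
    (hdir : ∀ G1 ∈ F, ∀ G2 ∈ F, ∃ G ∈ F, G ⊆ upSet G1 ∩ upSet G2) :
    ∃ D : Set X, DirSet D ∧ (∀ G ∈ F, (D ∩ G).Nonempty) ∧ D ⊆ ⋃₀ F := by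
  classical
  set E : Set X := ⋃₀ F with hEdef
  set S : Set (Set X) := {A | A ⊆ E ∧ (∀ x ∈ A, ∀ y ∈ E, sle y x → y ∈ A) ∧
      ∀ G ∈ F, (A ∩ G).Nonempty} with hSdef
  have hES : E ∈ S := by
    refine ⟨subset_rfl, fun _ _ y hy _ => hy, fun G hG => ?_⟩
    obtain ⟨g, hg⟩ := (hfin G hG).2
    exact ⟨g, ⟨G, hG, hg⟩, hg⟩
  have hzorn : ∀ c ⊆ S, IsChain (· ⊆ ·) c → ∃ lb ∈ S, ∀ s ∈ c, lb ⊆ s := by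
    intro c hcS hchain
    rcases c.eq_empty_or_nonempty with rfl | ⟨A0, hA0⟩
    · exact ⟨E, hES, by simp⟩
    refine ⟨⋂₀ c, ⟨?_, ?_, ?_⟩, fun s hs => Set.sInter_subset_of_mem hs⟩
    · exact (Set.sInter_subset_of_mem hA0).trans (hcS hA0).1
    · intro x hx y hy hsle A hA
      exact (hcS hA).2.1 x (hx A hA) y hy hsle
    · intro G hG
      set T : Set (Set X) := (fun A => A ∩ G) '' c with hTdef
      have hTfin : T.Finite := by
        refine Set.Finite.subset (hfin G hG).1.finite_subsets ?_
        rintro _ ⟨A, _, rfl⟩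
        exact Set.inter_subset_right
      have hTne : T.Nonempty := ⟨A0 ∩ G, A0, hA0, rfl⟩
      obtain ⟨m, hmT, hmin⟩ : ∃ m ∈ T, ∀ t ∈ T, t ⊆ m → m = t := by
        obtain ⟨m, hm⟩ := Set.Finite.exists_minimal hTfin hTne
        exact ⟨m, hm.prop, fun t ht h => (hm.eq_of_le ht h).symm⟩
      have hTchain : IsChain (· ⊆ ·) T := by
        rintro _ ⟨A, hA, rfl⟩ _ ⟨B, hB, rfl⟩ -
        rcases hchain.total hA hB with h | h
        · exact Or.inl (Set.inter_subset_inter_left G h)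
        · exact Or.inr (Set.inter_subset_inter_left G h)
      have hleast : ∀ t ∈ T, m ⊆ t := by
        intro t ht
        rcases hTchain.total hmT ht with h | h
        · exact h
        · exact (hmin t ht h).le
      obtain ⟨A1, hA1c, hmA1⟩ := hmT
      have hmne : m.Nonempty := by
        rw [← hmA1]; exact (hcS hA1c).2.2 G hG
      obtain ⟨g, hg⟩ := hmne
      refine ⟨g, ?_, ?_⟩
      · intro A hA
        exact ((hleast (A ∩ G) ⟨A, hA, rfl⟩) hg).1
      · rw [← hmA1] at hg; exact hg.2
  obtain ⟨M, hMmin⟩ := zorn_superset S hzorn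
  have hMS : M ∈ S := hMmin.prop
  have hkey : ∀ a ∈ M, ∃ G ∈ F, (M ∩ G).Nonempty ∧ ∀ z ∈ M ∩ G, sle a z := by
    intro a ha
    by_contra hcon
    push_neg at hcon
    have hM' : M \ {x | sle a x} ∈ S := by
      refine ⟨Set.diff_subset.trans hMS.1, ?_, ?_⟩
      · intro x hx y hy hsle
        refine ⟨hMS.2.1 x hx.1 y hy hsle, fun hay => hx.2 (sle_trans' hay hsle)⟩
      · intro G hG
        obtain ⟨z, ⟨hzM, hzG⟩, hnsle⟩ := hcon G hG (hMS.2.2 G hG)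
        exact ⟨z, ⟨hzM, hnsle⟩, hzG⟩
    have heq : M \ {x | sle a x} = M :=
      hMmin.eq_of_subset hM' Set.diff_subset
    have : a ∈ M \ {x | sle a x} := heq.symm ▸ ha
    exact this.2 (sle_refl' a)
  have hMne : M.Nonempty := by
    obtain ⟨G, hG⟩ := hne
    obtain ⟨g, hg⟩ := hMS.2.2 G hG
    exact ⟨g, hg.1⟩
  refine ⟨M, ⟨hMne, ?_⟩, hMS.2.2, hMS.1⟩
  intro a ha b hb
  obtain ⟨Ga, hGa, hGane, hGaa⟩ := hkey a ha
  obtain ⟨Gb, hGb, hGbne, hGbb⟩ := hkey b hb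
  obtain ⟨G, hG, hGsub⟩ := hdir Ga hGa Gb hGb
  obtain ⟨c, hcM, hcG⟩ := hMS.2.2 G hG
  obtain ⟨⟨fa, hfa, hfac⟩, ⟨fb, hfb, hfbc⟩⟩ := hGsub hcG
  have hfaM : fa ∈ M := hMS.2.1 c hcM fa ⟨Ga, hGa, hfa⟩ hfac
  have hfbM : fb ∈ M := hMS.2.1 c hcM fb ⟨Gb, hGb, hfb⟩ hfbc
  exact ⟨c, hcM, sle_trans' (hGaa fa ⟨hfaM, hfa⟩) hfac,
    sle_trans' (hGbb fb ⟨hfbM, hfb⟩) hfbc⟩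

lemma mdopen_of_memIS {U : Set X} (h : memIS X U) : MDOpen U := by
  intro D hD x hxU hconv
  letI : Preorder (↥D) :=
    { le := fun a b => sle a.1 b.1
      le_refl := fun a => sle_refl' a.1
      le_trans := fun a b c h1 h2 => sle_trans' h1 h2 }
  have hJne : Nonempty ↥D := hD.1.to_subtype
  have hJdir : ∀ a b : ↥D, ∃ c, a ≤ c ∧ b ≤ c := by
    intro a b
    obtain ⟨c, hc, h1, h2⟩ := hD.2 a.1 a.2 b.1 b.2
    exact ⟨⟨c, hc⟩, h1, h2⟩
  set I : Set (Set ↥D) := {A | ∃ d ∈ D, A ⊆ {j : ↥D | ¬ sle d j.1}} with hIdef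
  have hIdeal : IsIdeal I := by
    constructor
    · rintro A ⟨d, hd, hA⟩ B hBA
      exact ⟨d, hd, hBA.trans hA⟩
    · rintro A ⟨d1, hd1, hA⟩ B ⟨d2, hd2, hB⟩
      obtain ⟨d, hd, h1, h2⟩ := hD.2 d1 hd1 d2 hd2
      refine ⟨d, hd, ?_⟩
      rintro j (hj | hj) hdj
      · exact hA hj (sle_trans' h1 hdj)
      · exact hB hj (sle_trans' h2 hdj)
  have hIS : ISConv (Subtype.val : ↥D → X) I x :=
    ⟨D, hD, hconv, fun d hd => ⟨d, hd, fun j hj => hj⟩⟩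
  obtain ⟨d, hd, hsub⟩ := h ↥D hJne hJdir Subtype.val I hIdeal x hxU hIS
  refine ⟨d, hd, ?_⟩
  by_contra hdU
  exact hsub (show (⟨d, hd⟩ : ↥D) ∈ {j : ↥D | Subtype.val j ∉ U} from hdU) (sle_refl' d)

lemma memIS_of_memIGS {U : Set X} (h : memIGS X U) : memIS X U := by
  intro J _ hne hdir xj I hI x hx hconv
  obtain ⟨D, hD, hDc, hDI⟩ := hconv
  refine h J hne hdir xj I hI x hx ?_
  refine ⟨(fun d => ({d} : Set X)) '' D, ⟨?_, ?_⟩, ?_, ?_⟩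
  · rintro G ⟨d, hd, rfl⟩
    exact ⟨Set.finite_singleton d, Set.singleton_nonempty d⟩
  · rintro G1 ⟨d1, hd1, rfl⟩ G2 ⟨d2, hd2, rfl⟩
    obtain ⟨d, hd, h1, h2⟩ := hD.2 d1 hd1 d2 hd2
    refine ⟨{d}, ⟨d, hd, rfl⟩, ?_⟩
    rintro y rfl
    exact ⟨⟨d1, rfl, h1⟩, ⟨d2, rfl, h2⟩⟩
  · intro V hV hxV
    obtain ⟨d, hdD, hdV⟩ := hDc V hV hxV
    exact ⟨{d}, ⟨d, hdD, rfl⟩, by simpa using hdV⟩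
  · rintro G ⟨d, hd, rfl⟩
    refine hI.1 _ (hDI d hd) _ ?_
    intro j hj hsle
    exact hj ⟨d, rfl, hsle⟩

lemma memIGS_of_mdopen {U : Set X} (hU : MDOpen U) : memIGS X U := by
  intro J _ hne hdir xj I hI x hx hconv
  obtain ⟨F, hF, hFc, hFI⟩ := hconv
  have hFne : F.Nonempty := by
    obtain ⟨G, hG, -⟩ := hFc Set.univ isOpen_univ (Set.mem_univ x)
    exact ⟨G, hG⟩
  have hGU : ∃ G ∈ F, G ⊆ U := by
    by_contra hcon
    push_neg at hcon
    set F' : Set (Set X) := (fun G => G \ U) '' F with hF'def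
    have hne' : F'.Nonempty := hFne.image _
    have hfin' : ∀ G ∈ F', G.Finite ∧ G.Nonempty := by
      rintro _ ⟨G, hG, rfl⟩
      obtain ⟨a, haG, haU⟩ := Set.not_subset.mp (hcon G hG)
      exact ⟨((hF.1 G hG).1).subset Set.diff_subset, ⟨a, haG, haU⟩⟩
    have hdir' : ∀ G1 ∈ F', ∀ G2 ∈ F', ∃ G ∈ F', G ⊆ upSet G1 ∩ upSet G2 := by
      rintro _ ⟨G1, hG1, rfl⟩ _ ⟨G2, hG2, rfl⟩
      obtain ⟨G, hG, hGsub⟩ := hF.2 G1 hG1 G2 hG2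
      refine ⟨G \ U, ⟨G, hG, rfl⟩, ?_⟩
      rintro g ⟨hgG, hgU⟩
      obtain ⟨⟨a1, ha1, hs1⟩, ⟨a2, ha2, hs2⟩⟩ := hGsub hgG
      have ha1U : a1 ∉ U := fun h => hgU (mdopen_upper hU h hs1)
      have ha2U : a2 ∉ U := fun h => hgU (mdopen_upper hU h hs2)
      exact ⟨⟨a1, ⟨ha1, ha1U⟩, hs1⟩, ⟨a2, ⟨ha2, ha2U⟩, hs2⟩⟩
    obtain ⟨D, hD, hmeet, hsub⟩ := rudin_lemma F' hne' hfin' hdir'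
    have hDc : DConv D x := by
      intro V hV hxV
      obtain ⟨G, hG, hGV⟩ := hFc V hV hxV
      obtain ⟨d, hdD, hdG⟩ := hmeet (G \ U) ⟨G, hG, rfl⟩
      exact ⟨d, hdD, hGV hdG.1⟩
    obtain ⟨d, hdD, hdU⟩ := hU D hD x hx hDc
    obtain ⟨G', ⟨G, hG, rfl⟩, hdG'⟩ := hsub hdD
    exact hdG'.2 hdU
  obtain ⟨G, hGF, hGsub⟩ := hGU
  refine hI.1 _ (hFI G hGF) _ ?_
  rintro j hj ⟨a, haG, hsle⟩
  exact hj (mdopen_upper hU (hGsub haG) hsle)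

end Aux

/-- `IGS(X) = IS(X) = 𝒟(X)` for a T₀ space `X`. -/
theorem stmt_16 [TopologicalSpace X] [T0Space X] :
    {U : Set X | memIGS X U} = {U : Set X | memIS X U} ∧
      {U : Set X | memIS X U} = {U : Set X | MDOpen U} := by
  constructor
  · ext U
    simp only [Set.mem_setOf_eq]
    exact ⟨fun h => memIS_of_memIGS h,
      fun h => memIGS_of_mdopen (mdopen_of_memIS h)⟩
  · ext U
    simp only [Set.mem_setOf_eq]
    exact ⟨fun h => mdopen_of_memIS h,
      fun h => memIS_of_memIGS (memIGS_of_mdopen h)⟩
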